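/- The density result of Theorem 1 holds with the sigmoid replaced by the ReLU function: finite linear combinations of x̄ ↦ max(0, a(⟨x̄, z⟩² − c)), with z a unit vector in the admissible set, a > 0, c ∈ [0,1], are dense in L²(Ḡ, μ), where Ḡ is a subset of the unit sphere in ℝ^N contained in {x : x_{d+1} ≥ δ} for some δ > 0 and μ is a finite Borel measure. -/

import Mathlib

open MeasureTheory
open scoped RealInnerProductSpace

set_option linter.unusedSectionVars false
set_option linter.unusedVariables false
set_option maxHeartbeats 1000000

namespace DqnnRelu

variable {N : ℕ} {G : Set (EuclideanSpace ℝ (Fin N))} {μ : Measure (EuclideanSpace ℝ (Fin N))}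
  [IsFiniteMeasure μ] {g : EuclideanSpace ℝ (Fin N) → ℝ} {k : Fin N} {δ : ℝ}

lemma abs_coord_le_norm (x : EuclideanSpace ℝ (Fin N)) (i : Fin N) : |x i| ≤ ‖x‖ := by
  have h := abs_real_inner_le_norm x (EuclideanSpace.single i (1:ℝ))
  simpa [EuclideanSpace.inner_single_right, EuclideanSpace.norm_single] using h

lemma inner_abs_le_one {x z : EuclideanSpace ℝ (Fin N)} (hx : ‖x‖ = 1) (hz : ‖z‖ = 1) :
    |⟪x, z⟫| ≤ 1 := by
  have h := abs_real_inner_le_norm x z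
  rw [hx, hz] at h; simpa using h

lemma continuous_inner_left (z : EuclideanSpace ℝ (Fin N)) :
    Continuous fun x : EuclideanSpace ℝ (Fin N) => ⟪x, z⟫ :=
  continuous_id.inner continuous_const

lemma continuous_listprod (L : List (EuclideanSpace ℝ (Fin N))) :
    Continuous fun x : EuclideanSpace ℝ (Fin N) => (L.map fun z => ⟪x, z⟫).prod := by
  induction L with
  | nil => simpa using continuous_const
  | cons v L ih => simp only [List.map_cons, List.prod_cons]; exact (continuous_inner_left v).mul ih

lemma listprod_abs_le_one {x : EuclideanSpace ℝ (Fin N)} (hx : ‖x‖ = 1)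
    (L : List (EuclideanSpace ℝ (Fin N))) (hL : ∀ z ∈ L, ‖z‖ = 1) :
    |(L.map fun z => ⟪x, z⟫).prod| ≤ 1 := by
  induction L with
  | nil => simp
  | cons v L ih =>
    simp only [List.map_cons, List.prod_cons, abs_mul]
    have h1 : |⟪x, v⟫| ≤ 1 := inner_abs_le_one hx (hL v (by simp))
    have h2 := ih (fun z hz => hL z (by simp [hz]))
    calc |⟪x, v⟫| * |(L.map fun z => ⟪x, z⟫).prod| ≤ 1 * 1 :=
      mul_le_mul h1 h2 (abs_nonneg _) zero_le_one
    _ = 1 := by ring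

lemma poly_vanish {n : ℕ} (b : ℕ → ℝ) {S : Set ℝ} (hS : S.Infinite)
    (h : ∀ s ∈ S, ∑ j ∈ Finset.range n, s ^ j * b j = 0) : ∀ j < n, b j = 0 := by
  intro j hj
  set P : Polynomial ℝ := ∑ j ∈ Finset.range n, Polynomial.C (b j) * Polynomial.X ^ j with hP
  have heval : ∀ s : ℝ, P.eval s = ∑ j ∈ Finset.range n, s ^ j * b j := by
    intro s
    rw [hP]
    rw [Polynomial.eval_finset_sum]
    refine Finset.sum_congr rfl fun i _ => ?_
    rw [Polynomial.eval_mul, Polynomial.eval_C, Polynomial.eval_pow, Polynomial.eval_X, mul_comm]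
  have hPz : P = 0 := by
    apply Polynomial.eq_zero_of_infinite_isRoot
    apply hS.mono
    intro s hs
    simp only [Set.mem_setOf_eq, Polynomial.IsRoot, heval]
    exact h s hs
  have := congrArg (fun q => Polynomial.coeff q j) hPz
  simp only [hP, Polynomial.finset_sum_coeff, Polynomial.coeff_C_mul, Polynomial.coeff_X_pow,
    Polynomial.coeff_zero] at this
  rw [Finset.sum_eq_single j] at this
  · simpa using this
  · intro i _ hij; simp [Ne.symm hij]
  · intro hnot; exact absurd (Finset.mem_range.2 hj) hnot


lemma integrable_cont_mul (hGmeas : MeasurableSet G)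
    (hGsub : ∀ x ∈ G, ‖x‖ ≤ 1) (hg : Integrable g (μ.restrict G))
    (φ : EuclideanSpace ℝ (Fin N) → ℝ) (hφ : Continuous φ) :
    Integrable (fun x => φ x * g x) (μ.restrict G) := by
  obtain ⟨C, hC⟩ : ∃ C, ∀ y ∈ Metric.closedBall (0 : EuclideanSpace ℝ (Fin N)) 1, |φ y| ≤ C := by
    have hcpt : IsCompact (Metric.closedBall (0 : EuclideanSpace ℝ (Fin N)) 1) :=
      isCompact_closedBall _ _
    obtain ⟨C, hC⟩ := (hcpt.image (hφ.abs)).bddAbove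
    exact ⟨C, fun y hy => hC ⟨y, hy, rfl⟩⟩
  refine Integrable.mono' (hg.abs.const_mul C) ?_ ?_
  · exact (hφ.aestronglyMeasurable).mul hg.aestronglyMeasurable
  · filter_upwards [ae_restrict_mem hGmeas] with x hx
    have : |φ x| ≤ C := hC x (by simpa [Metric.mem_closedBall] using hGsub x hx)
    calc ‖φ x * g x‖ = |φ x| * |g x| := abs_mul _ _
    _ ≤ C * |g x| := by
        apply mul_le_mul_of_nonneg_right this (abs_nonneg _)

lemma kernel_pow {t : ℝ} (ht0 : 0 ≤ t) (ht1 : t ≤ 1) (n : ℕ) :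
    ∫ c in (0:ℝ)..1, max 0 (t - c) * c ^ n
      = t ^ (n + 2) / ((n + 1) * (n + 2)) := by
  have hint : ∀ a b : ℝ, IntervalIntegrable (fun c => max 0 (t - c) * c ^ n) volume a b := by
    intro a b
    exact (((continuous_const.max (continuous_const.sub continuous_id)).mul (continuous_pow n))).intervalIntegrable a b
  have hsplit : (∫ c in (0:ℝ)..t, max 0 (t - c) * c ^ n) + (∫ c in t..1, max 0 (t - c) * c ^ n)
      = ∫ c in (0:ℝ)..1, max 0 (t - c) * c ^ n :=
    intervalIntegral.integral_add_adjacent_intervals (hint 0 t) (hint t 1)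
  have h2 : (∫ c in t..1, max 0 (t - c) * c ^ n) = 0 := by
    have : ∀ c ∈ Set.uIcc t 1, max 0 (t - c) * c ^ n = 0 := by
      intro c hc
      rw [Set.uIcc_of_le ht1] at hc
      have : t - c ≤ 0 := by linarith [hc.1]
      simp [max_eq_left this]
    rw [intervalIntegral.integral_congr this]
    simp
  have h1 : (∫ c in (0:ℝ)..t, max 0 (t - c) * c ^ n)
      = t ^ (n + 2) / ((n + 1) * (n + 2)) := by
    have hcongr : ∀ c ∈ Set.uIcc (0:ℝ) t, max 0 (t - c) * c ^ n = t * c ^ n - c ^ (n+1) := by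
      intro c hc
      rw [Set.uIcc_of_le ht0] at hc
      have : 0 ≤ t - c := by linarith [hc.2]
      rw [max_eq_right this]; ring
    rw [intervalIntegral.integral_congr hcongr]
    rw [intervalIntegral.integral_sub (by exact (continuous_const.mul (continuous_pow n)).intervalIntegrable 0 t)
      ((continuous_pow (n+1)).intervalIntegrable 0 t)]
    rw [intervalIntegral.integral_const_mul, integral_pow, integral_pow]
    have h1' : ((n:ℝ) + 1) ≠ 0 := by positivity
    have h2' : ((n:ℝ) + 1 + 1) ≠ 0 := by positivity
    push_cast
    field_simp
    ring
  rw [← hsplit, h1, h2, add_zero]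


lemma int_pow_eq_zero {δ : ℝ} {k : Fin N} (hGmeas : MeasurableSet G)
    (hGsphere : ∀ x ∈ G, ‖x‖ = 1)
    (hg : Integrable g (μ.restrict G))
    (hOrth : ∀ c ∈ Set.Icc (0:ℝ) 1, ∀ z : EuclideanSpace ℝ (Fin N), ‖z‖ = 1 → δ ≤ z k →
      ∫ x in G, max 0 (⟪x, z⟫ ^ 2 - c) * g x ∂μ = 0)
    {z : EuclideanSpace ℝ (Fin N)} (hz1 : ‖z‖ = 1) (hzk : δ ≤ z k)
    {m : ℕ} (hm : 1 ≤ m) :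
    ∫ x in G, ⟪x, z⟫ ^ (2 * m) * g x ∂μ = 0 := by
  have hq01 : ∀ x ∈ G, 0 ≤ ⟪x, z⟫ ^ 2 ∧ ⟪x, z⟫ ^ 2 ≤ 1 := by
    intro x hx
    refine ⟨sq_nonneg _, ?_⟩
    have h := inner_abs_le_one (hGsphere x hx) hz1
    nlinarith [sq_abs (⟪x, z⟫ : ℝ), abs_nonneg (⟪x, z⟫ : ℝ)]
  rcases Nat.lt_or_ge m 2 with hm2 | hm2
  · -- m = 1
    interval_cases m
    have h0 := hOrth 0 ⟨le_refl 0, zero_le_one⟩ z hz1 hzk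
    rw [← h0]
    apply setIntegral_congr_fun hGmeas
    intro x hx
    have h1 := (hq01 x hx).1
    simp only [sub_zero, max_eq_right h1, pow_mul, pow_one]
  · obtain ⟨n, rfl⟩ : ∃ n, m = n + 2 := ⟨m - 2, by omega⟩
    set q : EuclideanSpace ℝ (Fin N) → ℝ := fun x => ⟪x, z⟫ ^ 2 with hqdef
    set ρ : Measure ℝ := (volume : Measure ℝ).restrict (Set.Ioc 0 1) with hρdef
    set F : EuclideanSpace ℝ (Fin N) → ℝ → ℝ := fun x c => max 0 (q x - c) * g x * c ^ n
      with hFdef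
    set K : ℝ := ((n:ℝ) + 1) * ((n:ℝ) + 2) with hKdef
    -- integrability on the product
    have hFmeas : AEStronglyMeasurable (Function.uncurry F) ((μ.restrict G).prod ρ) := by
      have hc1 : Continuous fun p : EuclideanSpace ℝ (Fin N) × ℝ => max 0 (q p.1 - p.2) * p.2 ^ n := by
        apply Continuous.mul
        · exact continuous_const.max (((continuous_id.inner continuous_const).pow 2).comp continuous_fst |>.sub continuous_snd)
        · exact continuous_snd.pow n
      have hgm : AEStronglyMeasurable (fun p : EuclideanSpace ℝ (Fin N) × ℝ => g p.1)
          ((μ.restrict G).prod ρ) := hg.aestronglyMeasurable.comp_fst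
      have : Function.uncurry F = fun p : EuclideanSpace ℝ (Fin N) × ℝ =>
          (max 0 (q p.1 - p.2) * p.2 ^ n) * g p.1 := by
        funext p; simp [hFdef, Function.uncurry]; ring
      rw [this]
      exact hc1.aestronglyMeasurable.mul hgm
    have hFint : Integrable (Function.uncurry F) ((μ.restrict G).prod ρ) := by
      refine Integrable.mono' (g := fun p => |g p.1| * 1) ?_ hFmeas ?_
      · exact hg.abs.mul_prod (integrable_const 1)
      · have hprodres : (μ.restrict G).prod ρ
            = (μ.prod (volume : Measure ℝ)).restrict (G ×ˢ Set.Ioc 0 1) := by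
          rw [hρdef, Measure.prod_restrict]
        rw [hprodres]
        filter_upwards [ae_restrict_mem (hGmeas.prod measurableSet_Ioc)] with p hp
        obtain ⟨hp1, hp2⟩ := hp
        have h01 := hq01 p.1 hp1
        have hb1 : |max 0 (q p.1 - p.2)| ≤ 1 := by
          rw [abs_of_nonneg (le_max_left _ _)]
          apply max_le zero_le_one
          have : 0 < p.2 := hp2.1
          simp only [hqdef]
          linarith [h01.2]
        have hb2 : |p.2 ^ n| ≤ 1 := by
          rw [abs_of_nonneg (pow_nonneg hp2.1.le n)]
          exact pow_le_one₀ hp2.1.le hp2.2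
        calc ‖F p.1 p.2‖ = |max 0 (q p.1 - p.2)| * |g p.1| * |p.2 ^ n| := by
              simp [hFdef, abs_mul]
        _ ≤ 1 * |g p.1| * 1 := by
              apply mul_le_mul (mul_le_mul hb1 (le_refl _) (abs_nonneg _) zero_le_one) hb2
                (abs_nonneg _)
              positivity
        _ = |g p.1| * 1 := by ring
    -- step 1 : rewrite the integrand using the kernel identity
    have hstep1 : ∫ x in G, ⟪x, z⟫ ^ (2 * (n + 2)) * g x ∂μ
        = K * ∫ x in G, (∫ c, F x c ∂ρ) ∂μ := by
      rw [← integral_const_mul]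
      apply setIntegral_congr_fun hGmeas
      intro x hx
      have h01 := hq01 x hx
      have hker := kernel_pow h01.1 h01.2 n
      have hioc : (∫ c in (0:ℝ)..1, max 0 (q x - c) * c ^ n) = ∫ c, max 0 (q x - c) * c ^ n ∂ρ := by
        rw [intervalIntegral.integral_of_le zero_le_one, hρdef]
      have hmul : (∫ c, F x c ∂ρ) = (∫ c, max 0 (q x - c) * c ^ n ∂ρ) * g x := by
        rw [← integral_mul_const]
        congr 1; funext c; simp only [hFdef]; ring
      have hinner : (∫ c, F x c ∂ρ) = ((q x) ^ (n + 2) / K) * g x := by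
        rw [hmul, ← hioc, hker, hKdef]
      have hK0 : K ≠ 0 := by rw [hKdef]; positivity
      show (⟪x, z⟫ : ℝ) ^ (2 * (n + 2)) * g x = K * ∫ c, F x c ∂ρ
      rw [hinner]
      have hpm : (⟪x, z⟫ : ℝ) ^ (2 * (n + 2)) = (q x) ^ (n + 2) := by
        rw [hqdef, ← pow_mul]
      rw [hpm]
      field_simp
    have hswap : ∫ x in G, (∫ c, F x c ∂ρ) ∂μ = ∫ c, (∫ x in G, F x c ∂μ) ∂ρ :=
      integral_integral_swap hFint
    have hzero : ∫ c, (∫ x in G, F x c ∂μ) ∂ρ = 0 := by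
      have hc0 : ∀ c ∈ Set.Ioc (0:ℝ) 1, (∫ x in G, F x c ∂μ) = 0 := by
        intro c hc
        have h1 : (∫ x in G, F x c ∂μ) = (∫ x in G, max 0 (q x - c) * g x ∂μ) * c ^ n := by
          rw [← integral_mul_const]
        rw [h1, hOrth c ⟨hc.1.le, hc.2⟩ z hz1 hzk, zero_mul]
      rw [hρdef]
      rw [setIntegral_congr_fun measurableSet_Ioc (g := fun _ => (0:ℝ)) fun c hc => hc0 c hc]
      simp
    rw [hstep1, hswap, hzero, mul_zero]


lemma binom_expand (hGmeas : MeasurableSet G)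
    (hGsub : ∀ x ∈ G, ‖x‖ ≤ 1) (hg : Integrable g (μ.restrict G))
    (u v : EuclideanSpace ℝ (Fin N)) (p : ℕ) (L : List (EuclideanSpace ℝ (Fin N))) (s : ℝ) :
    ∫ x in G, ⟪x, u + s • v⟫ ^ p * (L.map fun z => ⟪x, z⟫).prod * g x ∂μ
      = ∑ j ∈ Finset.range (p + 1), s ^ j *
          ((p.choose j : ℝ) *
            ∫ x in G, ⟪x, v⟫ ^ j * ⟪x, u⟫ ^ (p - j) * (L.map fun z => ⟪x, z⟫).prod * g x ∂μ) := by
  set Pi : EuclideanSpace ℝ (Fin N) → ℝ := fun x => (L.map fun z => ⟪x, z⟫).prod with hPi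
  have key : (fun x => (⟪x, u + s • v⟫:ℝ) ^ p * Pi x * g x)
      = fun x => ∑ j ∈ Finset.range (p + 1),
          ((s ^ j * (p.choose j : ℝ)) * ((⟪x, v⟫:ℝ) ^ j * (⟪x, u⟫:ℝ) ^ (p - j) * Pi x)) * g x := by
    funext x
    have h1 : (⟪x, u + s • v⟫:ℝ) = s * ⟪x, v⟫ + ⟪x, u⟫ := by
      rw [inner_add_right, real_inner_smul_right]; ring
    rw [h1, add_pow, Finset.sum_mul, Finset.sum_mul]
    refine Finset.sum_congr rfl fun j hj => ?_
    rw [mul_pow]; ring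
  calc ∫ x in G, (⟪x, u + s • v⟫:ℝ) ^ p * Pi x * g x ∂μ
      = ∫ x in G, (∑ j ∈ Finset.range (p + 1),
          ((s ^ j * (p.choose j : ℝ)) * ((⟪x, v⟫:ℝ) ^ j * (⟪x, u⟫:ℝ) ^ (p - j) * Pi x)) * g x) ∂μ := by
        rw [key]
  _ = ∑ j ∈ Finset.range (p + 1), ∫ x in G,
          ((s ^ j * (p.choose j : ℝ)) * ((⟪x, v⟫:ℝ) ^ j * (⟪x, u⟫:ℝ) ^ (p - j) * Pi x)) * g x ∂μ := by
        apply integral_finset_sum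
        intro j hj
        apply integrable_cont_mul hGmeas hGsub hg
        exact continuous_const.mul ((((continuous_id.inner continuous_const).pow j).mul
          ((continuous_id.inner continuous_const).pow (p - j))).mul (continuous_listprod L))
  _ = ∑ j ∈ Finset.range (p + 1), s ^ j *
          ((p.choose j : ℝ) * ∫ x in G, (⟪x, v⟫:ℝ) ^ j * (⟪x, u⟫:ℝ) ^ (p - j) * Pi x * g x ∂μ) := by
        refine Finset.sum_congr rfl fun j hj => ?_
        have : (fun x => ((s ^ j * (p.choose j : ℝ)) * ((⟪x, v⟫:ℝ) ^ j * (⟪x, u⟫:ℝ) ^ (p - j) * Pi x)) * g x)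
            = fun x => (s ^ j * (p.choose j : ℝ)) * ((⟪x, v⟫:ℝ) ^ j * (⟪x, u⟫:ℝ) ^ (p - j) * Pi x * g x) := by
          funext x; ring
        rw [this, integral_const_mul, mul_assoc]


lemma hpow_all (hGmeas : MeasurableSet G) (hGsphere : ∀ x ∈ G, ‖x‖ = 1)
    (hg : Integrable g (μ.restrict G)) (hδ0 : 0 < δ) (hδ1 : δ < 1)
    (hOrthPow : ∀ z : EuclideanSpace ℝ (Fin N), ‖z‖ = 1 → δ ≤ z k → ∀ m : ℕ, 1 ≤ m →
      ∫ x in G, ⟪x, z⟫ ^ (2 * m) * g x ∂μ = 0) :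
    ∀ (z : EuclideanSpace ℝ (Fin N)) (m : ℕ), 1 ≤ m →
      ∫ x in G, ⟪x, z⟫ ^ (2 * m) * g x ∂μ = 0 := by
  have hGsub : ∀ x ∈ G, ‖x‖ ≤ 1 := fun x hx => (hGsphere x hx).le
  -- step a: cone
  have hcone : ∀ (w : EuclideanSpace ℝ (Fin N)) (m : ℕ), 1 ≤ m → δ * ‖w‖ ≤ w k →
      ∫ x in G, ⟪x, w⟫ ^ (2 * m) * g x ∂μ = 0 := by
    intro w m hm hwk
    rcases eq_or_ne w 0 with rfl | hw0
    · have : (fun x : EuclideanSpace ℝ (Fin N) => (⟪x, (0:EuclideanSpace ℝ (Fin N))⟫:ℝ) ^ (2*m) * g x) = fun _ => 0 := by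
        funext x
        rw [inner_zero_right, zero_pow (by omega), zero_mul]
      rw [this, integral_zero]
    · have hnw : 0 < ‖w‖ := norm_pos_iff.2 hw0
      set wh : EuclideanSpace ℝ (Fin N) := ‖w‖⁻¹ • w with hwh
      have hwh1 : ‖wh‖ = 1 := by
        rw [hwh, norm_smul, norm_inv, norm_norm, inv_mul_cancel₀ hnw.ne']
      have hwhk : δ ≤ wh k := by
        have : wh k = ‖w‖⁻¹ * w k := rfl
        rw [this]
        calc δ = ‖w‖⁻¹ * (δ * ‖w‖) := by field_simp
        _ ≤ ‖w‖⁻¹ * w k := mul_le_mul_of_nonneg_left hwk (inv_nonneg.2 hnw.le)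
      have hw : w = ‖w‖ • wh := by rw [hwh, smul_inv_smul₀ hnw.ne']
      have : (fun x => (⟪x, w⟫:ℝ) ^ (2*m) * g x)
          = fun x => ‖w‖ ^ (2*m) * ((⟪x, wh⟫:ℝ) ^ (2*m) * g x) := by
        funext x
        conv_lhs => rw [hw]
        rw [real_inner_smul_right, mul_pow]
        ring
      rw [this, integral_const_mul, hOrthPow wh hwh1 hwhk m hm, mul_zero]
  -- step b: continuation
  intro z m hm
  set e : EuclideanSpace ℝ (Fin N) := EuclideanSpace.single k (1:ℝ) with he
  set v : EuclideanSpace ℝ (Fin N) := z - e with hv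
  set η : ℝ := (1 - δ) / (2 * (‖v‖ + 1)) with hη
  have hηpos : 0 < η := by
    rw [hη]
    have : 0 < ‖v‖ + 1 := by positivity
    apply div_pos (by linarith) (by linarith)
  have hek : e k = 1 := by rw [he]; simp
  have hnorme : ‖e‖ = 1 := by rw [he]; simp
  have hclaim : ∀ s : ℝ, |s| ≤ η → δ * ‖e + s • v‖ ≤ (e + s • v) k := by
    intro s hs
    have h1 : ‖e + s • v‖ ≤ 1 + |s| * ‖v‖ := by
      calc ‖e + s • v‖ ≤ ‖e‖ + ‖s • v‖ := norm_add_le _ _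
      _ = 1 + |s| * ‖v‖ := by rw [hnorme, norm_smul, Real.norm_eq_abs]
    have h2 : 1 - |s| * ‖v‖ ≤ (e + s • v) k := by
      have hco : (e + s • v) k = 1 + s * v k := by
        simp [hek]
      have : |s * v k| ≤ |s| * ‖v‖ := by
        rw [abs_mul]
        exact mul_le_mul_of_nonneg_left (abs_coord_le_norm v k) (abs_nonneg s)
      rw [hco]
      have := abs_le.1 this
      linarith [this.1]
    have ha : |s| * ‖v‖ ≤ (1 - δ) / 2 := by
      calc |s| * ‖v‖ ≤ η * (‖v‖ + 1) := by
            apply mul_le_mul hs (by linarith) (norm_nonneg _) hηpos.le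
      _ = (1 - δ) / 2 := by
            rw [hη]
            have hv1 : ‖v‖ + 1 ≠ 0 := by positivity
            field_simp
    have hvs : 0 ≤ |s| * ‖v‖ := by positivity
    nlinarith
  -- coefficients
  set b : ℕ → ℝ := fun j => ((2*m).choose j : ℝ) *
      ∫ x in G, (⟪x, v⟫:ℝ) ^ j * (⟪x, e⟫:ℝ) ^ (2*m - j) * (([] : List (EuclideanSpace ℝ (Fin N))).map fun z => ⟪x, z⟫).prod * g x ∂μ with hb
  have hbz : ∀ j < 2*m + 1, b j = 0 := by
    apply poly_vanish b (Set.Icc_infinite (show -η < η by linarith))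
    intro s hs
    have habs : |s| ≤ η := abs_le.2 ⟨hs.1, hs.2⟩
    have h0 := hcone (e + s • v) m hm (hclaim s habs)
    have hB := binom_expand hGmeas hGsub hg e v (2*m) [] s
    rw [← hB]
    rw [← h0]
    apply setIntegral_congr_fun hGmeas
    intro x hx
    simp
  have hfin := binom_expand hGmeas hGsub hg e v (2*m) [] 1
  have hz : e + (1:ℝ) • v = z := by rw [hv, one_smul]; abel
  rw [hz] at hfin
  have : ∫ x in G, (⟪x, z⟫:ℝ) ^ (2 * m) * g x ∂μ
      = ∫ x in G, (⟪x, z⟫:ℝ) ^ (2*m) * (([] : List (EuclideanSpace ℝ (Fin N))).map fun z => ⟪x, z⟫).prod * g x ∂μ := by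
    apply setIntegral_congr_fun hGmeas
    intro x hx
    simp
  rw [this, hfin]
  apply Finset.sum_eq_zero
  intro j hj
  rw [show ((2*m).choose j : ℝ) *
      (∫ x in G, (⟪x, v⟫:ℝ) ^ j * (⟪x, e⟫:ℝ) ^ (2*m - j) * (([] : List (EuclideanSpace ℝ (Fin N))).map fun z => ⟪x, z⟫).prod * g x ∂μ) = b j from rfl]
  rw [hbz j (Finset.mem_range.1 hj), mul_zero]


lemma int_g_zero (hGmeas : MeasurableSet G) (hGsphere : ∀ x ∈ G, ‖x‖ = 1)
    (hg : Integrable g (μ.restrict G))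
    (hpow : ∀ (z : EuclideanSpace ℝ (Fin N)) (m : ℕ), 1 ≤ m →
      ∫ x in G, ⟪x, z⟫ ^ (2 * m) * g x ∂μ = 0) :
    ∫ x in G, g x ∂μ = 0 := by
  have hGsub : ∀ x ∈ G, ‖x‖ ≤ 1 := fun x hx => (hGsphere x hx).le
  have key : (∫ x in G, g x ∂μ)
      = ∑ i : Fin N, ∫ x in G, (⟪x, EuclideanSpace.single i (1:ℝ)⟫:ℝ) ^ (2*1) * g x ∂μ := by
    rw [← integral_finset_sum]
    · apply setIntegral_congr_fun hGmeas
      intro x hx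
      have hsum : ∑ i : Fin N, (⟪x, EuclideanSpace.single i (1:ℝ)⟫:ℝ) ^ (2*1)
          = ∑ i : Fin N, (x i) ^ 2 := by
        refine Finset.sum_congr rfl fun i _ => ?_
        rw [EuclideanSpace.inner_single_right]
        norm_num
      have hnorm : ∑ i : Fin N, (x i) ^ 2 = 1 := by
        have h1 := hGsphere x hx
        have h2 : ‖x‖ = Real.sqrt (∑ i, ‖x i‖ ^ 2) := EuclideanSpace.norm_eq x
        rw [h1] at h2
        have h3 : (∑ i, ‖x i‖ ^ 2) = ∑ i, (x i) ^ 2 := by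
          refine Finset.sum_congr rfl fun i _ => ?_
          rw [Real.norm_eq_abs, sq_abs]
        rw [h3] at h2
        have h4 : Real.sqrt (∑ i, (x i) ^ 2) = 1 := h2.symm
        have h5 : 0 ≤ ∑ i, (x i) ^ 2 := Finset.sum_nonneg fun i _ => sq_nonneg _
        nlinarith [Real.sq_sqrt h5]
      show g x = ∑ i : Fin N, (⟪x, EuclideanSpace.single i (1:ℝ)⟫:ℝ) ^ (2*1) * g x
      rw [← Finset.sum_mul, hsum, hnorm, one_mul]
    · intro i _
      apply integrable_cont_mul hGmeas hGsub hg
      exact (continuous_id.inner continuous_const).pow _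
  rw [key]
  apply Finset.sum_eq_zero
  intro i _
  exact hpow _ 1 le_rfl

lemma master (hGmeas : MeasurableSet G) (hGsphere : ∀ x ∈ G, ‖x‖ = 1)
    (hg : Integrable g (μ.restrict G))
    (hpow : ∀ (z : EuclideanSpace ℝ (Fin N)) (m : ℕ), 1 ≤ m →
      ∫ x in G, ⟪x, z⟫ ^ (2 * m) * g x ∂μ = 0)
    (hzero : ∫ x in G, g x ∂μ = 0) :
    ∀ (L : List (EuclideanSpace ℝ (Fin N))) (u : EuclideanSpace ℝ (Fin N)) (p : ℕ),
      Even (p + L.length) →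
      ∫ x in G, ⟪x, u⟫ ^ p * (L.map fun z => ⟪x, z⟫).prod * g x ∂μ = 0 := by
  have hGsub : ∀ x ∈ G, ‖x‖ ≤ 1 := fun x hx => (hGsphere x hx).le
  intro L
  induction L with
  | nil =>
    intro u p hp
    simp only [List.length_nil, add_zero] at hp
    have hsimp : ∫ x in G, (⟪x, u⟫:ℝ) ^ p * (([] : List (EuclideanSpace ℝ (Fin N))).map fun z => ⟪x, z⟫).prod * g x ∂μ
        = ∫ x in G, (⟪x, u⟫:ℝ) ^ p * g x ∂μ := by
      apply setIntegral_congr_fun hGmeas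
      intro x hx
      simp
    rw [hsimp]
    obtain ⟨m, rfl⟩ := hp
    rcases Nat.eq_zero_or_pos m with rfl | hm
    · simpa using hzero
    · have : m + m = 2 * m := by ring
      rw [this]
      exact hpow u m hm
  | cons v L ih =>
    intro u p hp
    -- for every s, apply ih at u + s • v with exponent p + 1
    have hcoeff : ∀ j < p + 2, ((p+1).choose j : ℝ) *
        (∫ x in G, (⟪x, v⟫:ℝ) ^ j * (⟪x, u⟫:ℝ) ^ (p + 1 - j) * (L.map fun z => ⟪x, z⟫).prod * g x ∂μ) = 0 := by
      apply poly_vanish _ (Set.infinite_univ (α := ℝ))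
      intro s _
      rw [← binom_expand hGmeas hGsub hg u v (p+1) L s]
      apply ih (u + s • v) (p+1)
      simp only [List.length_cons] at hp
      have : p + 1 + L.length = p + (L.length + 1) := by ring
      rw [this]
      exact hp
    have h1 := hcoeff 1 (by omega)
    have hch : ((p+1).choose 1 : ℝ) = (p+1 : ℝ) := by
      rw [Nat.choose_one_right]
      push_cast
      ring
    rw [hch] at h1
    have hne : ((p:ℝ)+1) ≠ 0 := by positivity
    have h2 : (∫ x in G, (⟪x, v⟫:ℝ) ^ 1 * (⟪x, u⟫:ℝ) ^ (p + 1 - 1) * (L.map fun z => ⟪x, z⟫).prod * g x ∂μ) = 0 := by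
      rcases mul_eq_zero.1 h1 with h | h
      · exact absurd h hne
      · exact h
    rw [← h2]
    apply setIntegral_congr_fun hGmeas
    intro x hx
    show (⟪x, u⟫:ℝ) ^ p * ((v :: L).map fun z => ⟪x, z⟫).prod * g x
      = (⟪x, v⟫:ℝ) ^ 1 * (⟪x, u⟫:ℝ) ^ (p + 1 - 1) * (L.map fun z => ⟪x, z⟫).prod * g x
    simp only [List.map_cons, List.prod_cons, Nat.add_sub_cancel, pow_one]
    ring

lemma dup_len (L : List (EuclideanSpace ℝ (Fin N))) :
    (L.flatMap fun z => [z, z]).length = 2 * L.length := by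
  induction L with
  | nil => simp
  | cons v L ih => simp [List.flatMap_cons] at ih ⊢; omega

lemma dup_prod (x : EuclideanSpace ℝ (Fin N)) (L : List (EuclideanSpace ℝ (Fin N))) :
    (L.map fun z => (⟪x, z⟫:ℝ) ^ 2).prod
      = ((L.flatMap fun z => [z, z]).map fun z => (⟪x, z⟫:ℝ)).prod := by
  induction L with
  | nil => simp
  | cons v L ih =>
    simp only [List.map_cons, List.prod_cons, List.flatMap_cons, List.map_append,
      List.prod_append, List.map_cons, List.prod_cons]
    rw [← ih, List.map_nil, List.prod_nil, mul_one, sq]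

lemma prod_sq_int_zero (hGmeas : MeasurableSet G) (hGsphere : ∀ x ∈ G, ‖x‖ = 1)
    (hg : Integrable g (μ.restrict G))
    (hmaster : ∀ (L : List (EuclideanSpace ℝ (Fin N))) (u : EuclideanSpace ℝ (Fin N)) (p : ℕ),
      Even (p + L.length) →
      ∫ x in G, ⟪x, u⟫ ^ p * (L.map fun z => ⟪x, z⟫).prod * g x ∂μ = 0)
    (L : List (EuclideanSpace ℝ (Fin N))) :
    ∫ x in G, (L.map fun z => ⟪x, z⟫ ^ 2).prod * g x ∂μ = 0 := by
  set L2 : List (EuclideanSpace ℝ (Fin N)) := L.flatMap (fun z => [z, z]) with hL2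
  have hlen : L2.length = 2 * L.length := dup_len L
  have hdup : ∀ x : EuclideanSpace ℝ (Fin N),
      (L.map fun z => (⟪x, z⟫:ℝ) ^ 2).prod = (L2.map fun z => (⟪x, z⟫:ℝ)).prod :=
    fun x => dup_prod x L
  have hm := hmaster L2 0 0 (by rw [hlen]; simpa using even_two_mul L.length)
  rw [← hm]
  apply setIntegral_congr_fun hGmeas
  intro x hx
  show (L.map fun z => (⟪x, z⟫:ℝ) ^ 2).prod * g x
      = (⟪x, (0:EuclideanSpace ℝ (Fin N))⟫:ℝ) ^ 0 * (L2.map fun z => (⟪x, z⟫:ℝ)).prod * g x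
  rw [pow_zero, one_mul, hdup x]


lemma bcf_int_zero (hGmeas : MeasurableSet G) (hGsphere : ∀ x ∈ G, ‖x‖ = 1)
    (hGhalf : ∀ x ∈ G, δ ≤ x k) (hδ0 : 0 < δ)
    (hg : Integrable g (μ.restrict G))
    (hprod : ∀ L : List (EuclideanSpace ℝ (Fin N)),
      ∫ x in G, (L.map fun z => ⟪x, z⟫ ^ 2).prod * g x ∂μ = 0)
    (u : EuclideanSpace ℝ (Fin N) → ℝ) (hu : Continuous u) :
    ∫ x in G, u x * g x ∂μ = 0 := by
  have hGsub : ∀ x ∈ G, ‖x‖ ≤ 1 := fun x hx => (hGsphere x hx).le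
  set K : Set (EuclideanSpace ℝ (Fin N)) := {x | ‖x‖ = 1 ∧ δ ≤ x k} with hK
  have hKcl : IsClosed K := by
    apply IsClosed.inter
    · exact isClosed_eq continuous_norm continuous_const
    · exact isClosed_le continuous_const (PiLp.continuous_apply 2 _ k)
  have hKcpt : IsCompact K := by
    apply Metric.isCompact_of_isClosed_isBounded hKcl
    apply (Metric.isBounded_closedBall (x := (0:EuclideanSpace ℝ (Fin N))) (r := 1)).subset
    intro x hx
    simp only [Metric.mem_closedBall, dist_zero_right]
    exact hx.1.le
  haveI : CompactSpace K := isCompact_iff_compactSpace.1 hKcpt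
  have hGK : ∀ x ∈ G, x ∈ K := fun x hx => ⟨hGsphere x hx, hGhalf x hx⟩
  -- restriction algebra hom
  set incl : C(K, EuclideanSpace ℝ (Fin N)) := ⟨Subtype.val, continuous_subtype_val⟩ with hincl
  set ρalg : C(EuclideanSpace ℝ (Fin N), ℝ) →ₐ[ℝ] C(K, ℝ) :=
    ContinuousMap.compRightAlgHom ℝ ℝ incl with hρalg
  -- generators
  set qc : EuclideanSpace ℝ (Fin N) → C(EuclideanSpace ℝ (Fin N), ℝ) :=
    fun z => ⟨fun x => ⟪x, z⟫ ^ 2, ((continuous_id.inner continuous_const).pow 2)⟩ with hqc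
  set A : Subalgebra ℝ C(EuclideanSpace ℝ (Fin N), ℝ) := Algebra.adjoin ℝ (Set.range qc) with hA
  set B : Subalgebra ℝ C(K, ℝ) := A.map ρalg with hB
  -- separation of points
  have hsep : B.SeparatesPoints := by
    intro x y hxy
    refine ⟨fun w : K => (⟪(w:EuclideanSpace ℝ (Fin N)), (x:EuclideanSpace ℝ (Fin N))⟫:ℝ) ^ 2, ?_, ?_⟩
    · refine ⟨ρalg (qc x), ?_, rfl⟩
      exact ⟨qc x, Algebra.subset_adjoin ⟨x, rfl⟩, rfl⟩
    · -- values differ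
      have hx1 : ‖(x:EuclideanSpace ℝ (Fin N))‖ = 1 := x.2.1
      have hy1 : ‖(y:EuclideanSpace ℝ (Fin N))‖ = 1 := y.2.1
      have hxk : δ ≤ (x:EuclideanSpace ℝ (Fin N)) k := x.2.2
      have hyk : δ ≤ (y:EuclideanSpace ℝ (Fin N)) k := y.2.2
      simp only
      intro heq
      -- heq : ⟪y,x⟫^2 = ⟪x,x⟫^2
      have hxx : (⟪(x:EuclideanSpace ℝ (Fin N)), (x:EuclideanSpace ℝ (Fin N))⟫:ℝ) = 1 := by
        rw [real_inner_self_eq_norm_sq, hx1]; norm_num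
      rw [hxx] at heq
      have hyx2 : (⟪(y:EuclideanSpace ℝ (Fin N)), (x:EuclideanSpace ℝ (Fin N))⟫:ℝ) *
          (⟪(y:EuclideanSpace ℝ (Fin N)), (x:EuclideanSpace ℝ (Fin N))⟫:ℝ) = 1 := by
        rw [← sq, ← heq]; norm_num
      have hcases := mul_self_eq_one_iff.1 hyx2
      rcases hcases with h1 | h1
      · -- y = x
        have : ‖(y:EuclideanSpace ℝ (Fin N)) - (x:EuclideanSpace ℝ (Fin N))‖ ^ 2 = 0 := by
          rw [norm_sub_sq_real, hx1, hy1, h1]; ring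
        have : (y:EuclideanSpace ℝ (Fin N)) = (x:EuclideanSpace ℝ (Fin N)) := by
          have h2 := pow_eq_zero_iff (n := 2) (by norm_num) |>.1 this
          rwa [norm_sub_eq_zero_iff] at h2
        exact hxy (Subtype.ext this.symm)
      · -- y = -x impossible
        have : ‖(y:EuclideanSpace ℝ (Fin N)) + (x:EuclideanSpace ℝ (Fin N))‖ ^ 2 = 0 := by
          rw [norm_add_sq_real, hx1, hy1, h1]; ring
        have h2 := pow_eq_zero_iff (n := 2) (by norm_num) |>.1 this
        rw [norm_eq_zero] at h2
        rw [add_eq_zero_iff_eq_neg] at h2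
        have : δ ≤ -((x:EuclideanSpace ℝ (Fin N)) k) := by
          have := congrArg (fun w : EuclideanSpace ℝ (Fin N) => w k) h2
          simp at this
          rw [← this]; exact hyk
        linarith
  have hBtop : B.topologicalClosure = ⊤ :=
    ContinuousMap.subalgebra_topologicalClosure_eq_top_of_separatesPoints B hsep
  -- integrals vanish on the adjoin
  have hAint : ∀ b ∈ A, Integrable (fun x => b x * g x) (μ.restrict G) ∧
      ∫ x in G, b x * g x ∂μ = 0 := by
    intro b hb
    have hb' : b ∈ Submodule.span ℝ ((Submonoid.closure (Set.range qc) : Submonoid C(EuclideanSpace ℝ (Fin N), ℝ)) : Set C(EuclideanSpace ℝ (Fin N), ℝ)) := by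
      rw [← Algebra.adjoin_eq_span]
      exact hb
    refine Submodule.span_induction ?_ ?_ ?_ ?_ hb'
    · -- elements of the monoid closure
      intro w hw
      have hstruct : ∃ L : List (EuclideanSpace ℝ (Fin N)),
          ∀ x, w x = (L.map fun z => (⟪x, z⟫:ℝ) ^ 2).prod := by
        refine Submonoid.closure_induction ?_ ?_ ?_ hw
        · rintro _ ⟨z, rfl⟩
          exact ⟨[z], fun x => by simp [hqc]⟩
        · exact ⟨[], fun x => by simp⟩
        · rintro w₁ w₂ _ _ ⟨L₁, h₁⟩ ⟨L₂, h₂⟩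
          refine ⟨L₁ ++ L₂, fun x => ?_⟩
          rw [ContinuousMap.mul_apply, h₁, h₂, List.map_append, List.prod_append]
      obtain ⟨L, hL⟩ := hstruct
      constructor
      · exact integrable_cont_mul hGmeas hGsub hg w w.continuous
      · rw [← hprod L]
        apply setIntegral_congr_fun hGmeas
        intro x hx
        simp [hL x]
    · -- zero
      constructor
      · simpa using integrable_zero _ _ (μ.restrict G)
      · simp
    · -- add
      rintro v₁ v₂ _ _ ⟨hi₁, hz₁⟩ ⟨hi₂, hz₂⟩
      constructor
      · have := hi₁.add hi₂
        refine this.congr (Filter.Eventually.of_forall fun x => ?_)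
        simp [add_mul]
      · have : (fun x => (v₁ + v₂) x * g x) = fun x => v₁ x * g x + v₂ x * g x := by
          funext x; simp [add_mul]
        rw [this, integral_add hi₁ hi₂, hz₁, hz₂, add_zero]
    · -- smul
      rintro a v _ ⟨hi, hz⟩
      constructor
      · have := hi.const_mul a
        convert this using 1
        funext x
        simp [mul_assoc]
      · have : (fun x => (a • v) x * g x) = fun x => a * (v x * g x) := by
          funext x; simp [mul_assoc]
        rw [this, integral_const_mul, hz, mul_zero]
  -- approximate u by elements of B uniformly on K
  set uc : C(EuclideanSpace ℝ (Fin N), ℝ) := ⟨u, hu⟩ with huc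
  have hclosure : (ρalg uc) ∈ closure (B : Set C(K, ℝ)) := by
    have : (ρalg uc) ∈ B.topologicalClosure := by rw [hBtop]; exact Algebra.mem_top
    exact this
  have habs : ∀ ε₀ : ℝ, 0 < ε₀ →
      |∫ x in G, u x * g x ∂μ| ≤ ε₀ * ∫ x in G, |g x| ∂μ := by
    intro ε₀ hε₀
    obtain ⟨b', hb'B, hb'd⟩ := Metric.mem_closure_iff.1 hclosure ε₀ hε₀
    obtain ⟨b, hbA, rfl⟩ := hb'B
    have hbu : ∀ x ∈ G, |u x - b x| ≤ ε₀ := by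
      intro x hx
      have hxK : x ∈ K := hGK x hx
      have := ContinuousMap.dist_apply_le_dist (f := ρalg uc) (g := ρalg b) (⟨x, hxK⟩ : K)
      have h2 : dist (u x) (b x) ≤ dist (ρalg uc) (ρalg b) := this
      rw [Real.dist_eq] at h2
      exact h2.trans hb'd.le
    have hint_u : Integrable (fun x => u x * g x) (μ.restrict G) :=
      integrable_cont_mul hGmeas hGsub hg u hu
    have hint_b : Integrable (fun x => b x * g x) (μ.restrict G) :=
      integrable_cont_mul hGmeas hGsub hg b b.continuous
    have hd : Integrable (fun x => (u x - b x) * g x) (μ.restrict G) :=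
      integrable_cont_mul hGmeas hGsub hg (fun x => u x - b x) (hu.sub b.continuous)
    have hsub : ∫ x in G, u x * g x ∂μ
        = ∫ x in G, (u x - b x) * g x ∂μ + ∫ x in G, b x * g x ∂μ := by
      rw [← integral_add hd hint_b]
      apply setIntegral_congr_fun hGmeas
      intro x _
      show u x * g x = (u x - b x) * g x + b x * g x
      ring
    rw [hsub, (hAint b hbA).2, add_zero]
    calc |∫ x in G, (u x - b x) * g x ∂μ| ≤ ∫ x in G, |u x - b x| * |g x| ∂μ := by
          simpa [Real.norm_eq_abs, abs_mul] using
            norm_integral_le_integral_norm (μ := μ.restrict G) (fun x => (u x - b x) * g x)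
    _ ≤ ∫ x in G, ε₀ * |g x| ∂μ := by
        apply setIntegral_mono_on ?_ (hg.abs.const_mul ε₀) hGmeas
        · intro x hx
          exact mul_le_mul_of_nonneg_right (hbu x hx) (abs_nonneg _)
        · have : (fun x => |u x - b x| * |g x|) = fun x => |(u x - b x) * g x| := by
            funext x; rw [abs_mul]
          rw [this]
          exact hd.abs
    _ = ε₀ * ∫ x in G, |g x| ∂μ := integral_const_mul _ _
  -- conclude
  set I : ℝ := ∫ x in G, u x * g x ∂μ with hI
  set C : ℝ := ∫ x in G, |g x| ∂μ with hC
  have hCnn : 0 ≤ C := integral_nonneg fun x => abs_nonneg _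
  by_contra hne
  have hIpos : 0 < |I| := abs_pos.2 hne
  have key := habs (|I| / (2 * (C + 1))) (by positivity)
  rw [div_mul_eq_mul_div, le_div_iff₀ (by positivity)] at key
  nlinarith [key, hCnn, hIpos]


lemma coeFn_finset_sum' {α : Type*} [MeasurableSpace α] {ν : Measure α} {ι : Type*}
    (s : Finset ι) (v : ι → Lp ℝ 2 ν) :
    ⇑(∑ i ∈ s, v i) =ᵐ[ν] fun x => ∑ i ∈ s, v i x := by
  induction s using Finset.cons_induction with
  | empty => simp only [Finset.sum_empty]; exact Lp.coeFn_zero ℝ 2 ν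
  | cons i s his ih =>
    filter_upwards [Lp.coeFn_add (v i) (∑ j ∈ s, v j), ih] with x h1 h2
    rw [Finset.sum_cons, Finset.sum_cons, h1, Pi.add_apply, h2]

lemma coeFn_finset_sum {α : Type*} [MeasurableSpace α] {ν : Measure α} {n : ℕ}
    (v : Fin n → Lp ℝ 2 ν) : ⇑(∑ i, v i) =ᵐ[ν] fun x => ∑ i, v i x :=
  coeFn_finset_sum' Finset.univ v

lemma eq_single_of_norm_one_coord_ge {x : EuclideanSpace ℝ (Fin N)} {k : Fin N}
    (hx : ‖x‖ = 1) (hk : 1 ≤ x k) : x = EuclideanSpace.single k (1:ℝ) := by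
  have h2 : ‖x‖ = Real.sqrt (∑ i, ‖x i‖ ^ 2) := EuclideanSpace.norm_eq x
  rw [hx] at h2
  have h3 : (∑ i, ‖x i‖ ^ 2) = ∑ i, (x i) ^ 2 := by
    refine Finset.sum_congr rfl fun i _ => ?_
    rw [Real.norm_eq_abs, sq_abs]
  rw [h3] at h2
  have h5 : 0 ≤ ∑ i, (x i) ^ 2 := Finset.sum_nonneg fun i _ => sq_nonneg _
  have hsum : ∑ i, (x i) ^ 2 = 1 := by nlinarith [Real.sq_sqrt h5]
  have hxk : x k = 1 := by
    have h6 : (x k) ^ 2 ≤ ∑ i, (x i) ^ 2 :=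
      Finset.single_le_sum (f := fun i => (x i)^2) (fun i _ => sq_nonneg _) (Finset.mem_univ k)
    nlinarith
  have hrest : ∑ i ∈ Finset.univ.erase k, (x i) ^ 2 = 0 := by
    have h7 : (fun i => (x i)^2) k + ∑ i ∈ Finset.univ.erase k, (x i) ^ 2 = 1 :=
      (Finset.add_sum_erase Finset.univ (fun i => (x i)^2) (Finset.mem_univ k)).trans hsum
    have h8 : (fun i => (x i)^2) k = 1 := by simp [hxk]
    linarith
  have hzero : ∀ i ∈ Finset.univ.erase k, (x i) ^ 2 = 0 :=
    (Finset.sum_eq_zero_iff_of_nonneg fun i _ => sq_nonneg _).1 hrest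
  ext i
  rcases eq_or_ne i k with rfl | hik
  · rw [hxk, EuclideanSpace.single_apply, if_pos rfl]
  · have := hzero i (Finset.mem_erase.2 ⟨hik, Finset.mem_univ i⟩)
    have hxi : x i = 0 := by nlinarith [sq_nonneg (x i)]
    rw [hxi, EuclideanSpace.single_apply, if_neg hik]


end DqnnRelu

open DqnnRelu

theorem dqnn_universality_relu (N : ℕ) (k : Fin N) (δ : ℝ) (hδ : 0 < δ)
    (G : Set (EuclideanSpace ℝ (Fin N))) (hGmeas : MeasurableSet G)
    (hGsphere : ∀ x ∈ G, ‖x‖ = 1) (hGhalf : ∀ x ∈ G, δ ≤ x k)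
    (μ : Measure (EuclideanSpace ℝ (Fin N))) [IsFiniteMeasure μ]
    (f : EuclideanSpace ℝ (Fin N) → ℝ) (hf : MemLp f 2 (μ.restrict G))
    (ε : ℝ) (hε : 0 < ε) :
    ∃ (n_s : ℕ) (z : Fin n_s → EuclideanSpace ℝ (Fin N)) (a c α : Fin n_s → ℝ),
      (∀ j, ‖z j‖ = 1) ∧ (∀ j, δ ≤ z j k) ∧ (∀ j, 0 < a j) ∧
      (∀ j, c j ∈ Set.Icc (0:ℝ) 1) ∧
      ∫ x in G, ((∑ j, α j * max 0 (a j * (⟪x, z j⟫ ^ 2 - c j))) - f x) ^ 2 ∂μ < ε := by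
  rcases lt_or_ge δ 1 with hδ1 | hδ1
  swap
  · -- degenerate case : δ ≥ 1
    rcases lt_or_eq_of_le hδ1 with hδgt | hδeq
    · -- δ > 1 : G is empty
      have hGempty : G = ∅ := by
        by_contra h
        obtain ⟨x, hx⟩ := Set.nonempty_iff_ne_empty.2 h
        have h1 := abs_coord_le_norm x k
        have h2 := hGsphere x hx
        have h3 := hGhalf x hx
        rw [h2] at h1
        have := le_abs_self (x k)
        linarith
      refine ⟨0, Fin.elim0, Fin.elim0, Fin.elim0, Fin.elim0,
        fun j => j.elim0, fun j => j.elim0, fun j => j.elim0, fun j => j.elim0, ?_⟩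
      rw [hGempty]
      simpa using hε
    · -- δ = 1 : G ⊆ {single k 1}
      subst hδeq
      set e : EuclideanSpace ℝ (Fin N) := EuclideanSpace.single k (1:ℝ) with he
      have hnorme : ‖e‖ = 1 := by rw [he]; simp
      have hek : e k = 1 := by rw [he]; simp
      refine ⟨1, fun _ => e, fun _ => 1, fun _ => 0, fun _ => f e,
        fun j => hnorme, fun j => le_of_eq hek.symm, fun j => one_pos,
        fun j => ⟨le_refl 0, zero_le_one⟩, ?_⟩
      have hzero : ∫ x in G, ((∑ j : Fin 1, f e * max 0 (1 * (⟪x, e⟫ ^ 2 - 0))) - f x) ^ 2 ∂μ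
          = 0 := by
        rw [setIntegral_congr_fun hGmeas (g := fun _ => (0:ℝ)) ?_, integral_zero]
        intro x hx
        have hxe : x = e := eq_single_of_norm_one_coord_ge (hGsphere x hx) (hGhalf x hx)
        have hinner : (⟪x, e⟫ : ℝ) = 1 := by
          rw [hxe, real_inner_self_eq_norm_sq, hnorme]; norm_num
        show ((∑ j : Fin 1, f e * max 0 (1 * ((⟪x, e⟫:ℝ) ^ 2 - 0))) - f x) ^ 2 = 0
        rw [hinner, hxe]
        norm_num
      rw [hzero]; exact hε
  · -- main case : δ < 1
    have hGsub : ∀ x ∈ G, ‖x‖ ≤ 1 := fun x hx => (hGsphere x hx).le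
    -- the ReLU functions are in L²
    have hrelu_cont : ∀ (z : EuclideanSpace ℝ (Fin N)) (a c : ℝ),
        Continuous (fun x => max 0 (a * ((⟪x, z⟫:ℝ) ^ 2 - c))) := by
      intro z a c
      exact continuous_const.max (continuous_const.mul
        (((continuous_id.inner continuous_const).pow 2).sub continuous_const))
    have hrelu_mem : ∀ (z : EuclideanSpace ℝ (Fin N)) (a c : ℝ), ‖z‖ = 1 →
        MemLp (fun x => max 0 (a * ((⟪x, z⟫:ℝ) ^ 2 - c))) 2 (μ.restrict G) := by
      intro z a c hz1
      apply MemLp.of_bound ((hrelu_cont z a c).aestronglyMeasurable) (|a| * (1 + |c|))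
      filter_upwards [ae_restrict_mem hGmeas] with x hx
      have h1 : |(⟪x, z⟫:ℝ)| ≤ 1 := inner_abs_le_one (hGsphere x hx) hz1
      have h2 : (⟪x, z⟫:ℝ) ^ 2 ≤ 1 := by nlinarith [h1, sq_abs (⟪x, z⟫:ℝ), abs_nonneg (⟪x, z⟫:ℝ)]
      have h3 : 0 ≤ (⟪x, z⟫:ℝ) ^ 2 := sq_nonneg _
      rw [Real.norm_eq_abs, abs_of_nonneg (le_max_left _ _)]
      have h4 : a * ((⟪x, z⟫:ℝ) ^ 2 - c) ≤ |a| * (1 + |c|) := by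
        calc a * ((⟪x, z⟫:ℝ) ^ 2 - c) ≤ |a * ((⟪x, z⟫:ℝ) ^ 2 - c)| := le_abs_self _
        _ = |a| * |(⟪x, z⟫:ℝ) ^ 2 - c| := abs_mul _ _
        _ ≤ |a| * (1 + |c|) := by
            apply mul_le_mul_of_nonneg_left _ (abs_nonneg a)
            have := abs_sub_abs_le_abs_sub ((⟪x, z⟫:ℝ)^2) c
            have h5 : |(⟪x, z⟫:ℝ)^2 - c| ≤ |(⟪x, z⟫:ℝ)^2| + |c| := abs_sub _ _
            have h6 : |(⟪x, z⟫:ℝ)^2| ≤ 1 := by rw [abs_of_nonneg h3]; exact h2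
            linarith
      have h7 : (0:ℝ) ≤ |a| * (1 + |c|) := by positivity
      exact max_le h7 h4
    -- the span of ReLU functions
    set S₀ : Set (Lp ℝ 2 (μ.restrict G)) := {h | ∃ z a c, ∃ hp : (‖z‖ = 1 ∧ δ ≤ z k ∧ 0 < a ∧ c ∈ Set.Icc (0:ℝ) 1),
        h = MemLp.toLp _ (hrelu_mem z a c hp.1)} with hS₀
    set S : Submodule ℝ (Lp ℝ 2 (μ.restrict G)) := Submodule.span ℝ S₀ with hS
    have horthbot : Sᗮ = ⊥ := by
      rw [Submodule.eq_bot_iff]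
      intro gL hgL
      have hgmem : MemLp (⇑gL) 2 (μ.restrict G) := Lp.memLp gL
      have hgint : Integrable (⇑gL) (μ.restrict G) := hgmem.integrable (by norm_num)
      have hOrth : ∀ c ∈ Set.Icc (0:ℝ) 1, ∀ z : EuclideanSpace ℝ (Fin N), ‖z‖ = 1 → δ ≤ z k →
          ∫ x in G, max 0 ((⟪x, z⟫:ℝ) ^ 2 - c) * gL x ∂μ = 0 := by
        intro c hc z hz1 hzk
        have hp : ‖z‖ = 1 ∧ δ ≤ z k ∧ (0:ℝ) < 1 ∧ c ∈ Set.Icc (0:ℝ) 1 := ⟨hz1, hzk, one_pos, hc⟩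
        have hmem : MemLp.toLp _ (hrelu_mem z 1 c hp.1) ∈ S :=
          Submodule.subset_span ⟨z, 1, c, hp, rfl⟩
        have h0 := (Submodule.mem_orthogonal S gL).1 hgL _ hmem
        rw [L2.inner_def] at h0
        have h1 : ∫ x, (max 0 (1 * ((⟪x, z⟫:ℝ) ^ 2 - c))) * gL x ∂(μ.restrict G) = 0 := by
          have hcongr : (fun x => (max 0 (1 * ((⟪x, z⟫:ℝ) ^ 2 - c))) * gL x)
              =ᵐ[μ.restrict G] fun x =>
                (⟪(MemLp.toLp _ (hrelu_mem z 1 c hp.1) : Lp ℝ 2 (μ.restrict G)) x, gL x⟫ : ℝ) := by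
            filter_upwards [MemLp.coeFn_toLp (hrelu_mem z 1 c hp.1)] with x hx
            rw [hx]
            simp only [RCLike.inner_apply', conj_trivial]
          exact (integral_congr_ae hcongr).trans h0
        calc ∫ x in G, max 0 ((⟪x, z⟫:ℝ) ^ 2 - c) * gL x ∂μ
            = ∫ x in G, max 0 (1 * ((⟪x, z⟫:ℝ) ^ 2 - c)) * gL x ∂μ := by
              apply setIntegral_congr_fun hGmeas
              intro x _
              show max 0 ((⟪x, z⟫:ℝ) ^ 2 - c) * gL x = max 0 (1 * ((⟪x, z⟫:ℝ) ^ 2 - c)) * gL x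
              rw [one_mul]
        _ = 0 := h1
      have hOrthPow : ∀ z : EuclideanSpace ℝ (Fin N), ‖z‖ = 1 → δ ≤ z k → ∀ m : ℕ, 1 ≤ m →
          ∫ x in G, (⟪x, z⟫:ℝ) ^ (2 * m) * gL x ∂μ = 0 :=
        fun z hz1 hzk m hm => int_pow_eq_zero hGmeas hGsphere hgint hOrth hz1 hzk hm
      have hpow := hpow_all hGmeas hGsphere hgint hδ hδ1 hOrthPow
      have hzero := int_g_zero hGmeas hGsphere hgint hpow
      have hmaster := master hGmeas hGsphere hgint hpow hzero
      have hprodL := prod_sq_int_zero hGmeas hGsphere hgint hmaster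
      have hbcf := fun u hu => bcf_int_zero hGmeas hGsphere hGhalf hδ hgint hprodL u hu
      -- density of bounded continuous functions
      have hdense : DenseRange (BoundedContinuousFunction.toLp (E := ℝ) 2 (μ.restrict G) ℝ) :=
        BoundedContinuousFunction.toLp_denseRange ℝ (μ.restrict G) ℝ (by simp)
      have hZcl : IsClosed {h : Lp ℝ 2 (μ.restrict G) | (⟪h, gL⟫ : ℝ) = 0} :=
        isClosed_eq (continuous_id.inner continuous_const) continuous_const
      have hrange : Set.range (BoundedContinuousFunction.toLp (E := ℝ) 2 (μ.restrict G) ℝ)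
          ⊆ {h : Lp ℝ 2 (μ.restrict G) | (⟪h, gL⟫ : ℝ) = 0} := by
        rintro _ ⟨u, rfl⟩
        show (⟪BoundedContinuousFunction.toLp (E := ℝ) 2 (μ.restrict G) ℝ u, gL⟫ : ℝ) = 0
        rw [L2.inner_def]
        have h1 : ∫ x in G, u x * gL x ∂μ = 0 := hbcf u u.continuous
        have hcongr : (fun x => (⟪(BoundedContinuousFunction.toLp (E := ℝ) 2 (μ.restrict G) ℝ u) x, gL x⟫ : ℝ))
            =ᵐ[μ.restrict G] fun x => u x * gL x := by
          filter_upwards [BoundedContinuousFunction.coeFn_toLp 2 (μ.restrict G) ℝ u] with x hx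
          rw [hx]
          simp only [RCLike.inner_apply', conj_trivial]
        exact (integral_congr_ae hcongr).trans h1
      have hall : ∀ h : Lp ℝ 2 (μ.restrict G), (⟪h, gL⟫ : ℝ) = 0 := by
        intro h
        have h1 : (Set.univ : Set (Lp ℝ 2 (μ.restrict G)))
            ⊆ {h : Lp ℝ 2 (μ.restrict G) | (⟪h, gL⟫ : ℝ) = 0} := by
          rw [← hdense.closure_range]
          exact closure_minimal hrange hZcl
        exact h1 (Set.mem_univ h)
      have := hall gL
      rwa [inner_self_eq_zero] at this
    have hclos : S.topologicalClosure = ⊤ := Submodule.topologicalClosure_eq_top_iff.2 horthbot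
    -- approximate f
    set fL : Lp ℝ 2 (μ.restrict G) := MemLp.toLp f hf with hfL
    have hmemcl : fL ∈ closure (S : Set (Lp ℝ 2 (μ.restrict G))) := by
      have h1 : fL ∈ S.topologicalClosure := by rw [hclos]; trivial
      exact h1
    obtain ⟨s, hsS, hds⟩ := Metric.mem_closure_iff.1 hmemcl (Real.sqrt ε) (Real.sqrt_pos.2 hε)
    obtain ⟨n, γ, w, hsum⟩ := Submodule.mem_span_set'.1 hsS
    have hw : ∀ i : Fin n, ∃ z a c, ∃ hp : (‖z‖ = 1 ∧ δ ≤ z k ∧ 0 < a ∧ c ∈ Set.Icc (0:ℝ) 1),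
        (w i : Lp ℝ 2 (μ.restrict G)) = MemLp.toLp _ (hrelu_mem z a c hp.1) := fun i => (w i).2
    choose zf af cf hp heq using hw
    refine ⟨n, zf, af, cf, γ, fun j => (hp j).1, fun j => (hp j).2.1, fun j => (hp j).2.2.1,
      fun j => (hp j).2.2.2, ?_⟩
    -- identify the sum with s
    have hFs : ⇑s =ᵐ[μ.restrict G] fun x => ∑ j, γ j * max 0 (af j * ((⟪x, zf j⟫:ℝ) ^ 2 - cf j)) := by
      rw [← hsum]
      have h2 : ∀ i : Fin n, ⇑(γ i • (w i : Lp ℝ 2 (μ.restrict G)))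
          =ᵐ[μ.restrict G] fun x => γ i * max 0 (af i * ((⟪x, zf i⟫:ℝ) ^ 2 - cf i)) := by
        intro i
        have h3 : ⇑(w i : Lp ℝ 2 (μ.restrict G))
            =ᵐ[μ.restrict G] fun x => max 0 (af i * ((⟪x, zf i⟫:ℝ) ^ 2 - cf i)) := by
          rw [heq i]
          exact MemLp.coeFn_toLp _
        filter_upwards [Lp.coeFn_smul (γ i) (w i : Lp ℝ 2 (μ.restrict G)), h3] with x ha hb
        rw [ha, Pi.smul_apply, hb, smul_eq_mul]
      filter_upwards [coeFn_finset_sum (fun i => γ i • (w i : Lp ℝ 2 (μ.restrict G))),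
        ae_all_iff.2 h2] with x hx1 hx2
      rw [hx1]
      exact Finset.sum_congr rfl fun i _ => hx2 i
    have hdiff : (fun x => (∑ j, γ j * max 0 (af j * ((⟪x, zf j⟫:ℝ) ^ 2 - cf j))) - f x)
        =ᵐ[μ.restrict G] ⇑(s - fL) := by
      filter_upwards [Lp.coeFn_sub s fL, hFs, MemLp.coeFn_toLp hf] with x h1 h2 h3
      rw [h1, Pi.sub_apply, h2, hfL, h3]
    calc ∫ x in G, ((∑ j, γ j * max 0 (af j * ((⟪x, zf j⟫:ℝ) ^ 2 - cf j))) - f x) ^ 2 ∂μ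
        = ∫ x, ((s - fL) x) ^ 2 ∂(μ.restrict G) := by
          apply integral_congr_ae
          filter_upwards [hdiff] with x hx
          rw [hx]
    _ = (⟪s - fL, s - fL⟫ : ℝ) := by
          rw [L2.inner_def]
          apply integral_congr_ae
          filter_upwards with x
          simp only [RCLike.inner_apply', conj_trivial, sq]
    _ = ‖s - fL‖ ^ 2 := real_inner_self_eq_norm_sq _
    _ < ε := by
          have h1 : ‖s - fL‖ = dist s fL := by rw [dist_eq_norm]
          have h2 : dist s fL < Real.sqrt ε := by rw [dist_comm]; exact hds
          have h3 : 0 ≤ ‖s - fL‖ := norm_nonneg _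
          nlinarith [Real.sq_sqrt hε.le]
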